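/- Completeness of the top-level synthesis algorithm: assume (1) the angelic synthesizer is complete, i.e., if SynthesizeAngelic(ψ) returns Failure(κ) then no program P satisfies P ⊨^angel ψ, and (2) whenever SynthesizeAngelic returns Failure(κ), the set κ is a valid anti-specification, i.e., for every φ ∈ κ and every program P, P ⊨ φ implies P ⊭ χ. Then if Synthesize(χ) returns ⊥, no program satisfies χ under the standard semantics. -/

import Mathlib

/-- Values of the simple ML-like language: unit, pairs, sums. -/
inductive Val : Type
  | unit : Val
  | pair : Val → Val → Val
  | inl  : Val → Val
  | inr  : Val → Val

/-- Expressions of the simple ML-like language with a single recursive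
function symbol `f` (written `app e` for `f e`) and a single variable `x`. -/
inductive Expr : Type
  | var    : Expr
  | app    : Expr → Expr
  | unit   : Expr
  | pair   : Expr → Expr → Expr
  | fst    : Expr → Expr
  | snd    : Expr → Expr
  | inl    : Expr → Expr
  | inr    : Expr → Expr
  | unl    : Expr → Expr
  | unr    : Expr → Expr
  | switch : Expr → Expr → Expr → Expr

/-- Standard big-step semantics `e ⇓ v` for the program `rec f(x) = body`,
with `env` the value currently substituted for `x`.  A recursive call
`f e` unfolds `body` at the value of `e`. -/
inductive Eval (body : Expr) : Val → Expr → Val → Prop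
  | var {env} : Eval body env .var env
  | app {env e v v'} : Eval body env e v → Eval body v body v' →
      Eval body env (.app e) v'
  | unit {env} : Eval body env .unit .unit
  | pair {env e1 e2 v1 v2} : Eval body env e1 v1 → Eval body env e2 v2 →
      Eval body env (.pair e1 e2) (.pair v1 v2)
  | fst {env e v1 v2} : Eval body env e (.pair v1 v2) → Eval body env (.fst e) v1
  | snd {env e v1 v2} : Eval body env e (.pair v1 v2) → Eval body env (.snd e) v2
  | inl {env e v} : Eval body env e v → Eval body env (.inl e) (.inl v)
  | inr {env e v} : Eval body env e v → Eval body env (.inr e) (.inr v)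
  | unl {env e v} : Eval body env e (.inl v) → Eval body env (.unl e) v
  | unr {env e v} : Eval body env e (.inr v) → Eval body env (.unr e) v
  | switchL {env e3 e1 e2 v3 v1} : Eval body env e3 (.inl v3) →
      Eval body env e1 v1 → Eval body env (.switch e3 e1 e2) v1
  | switchR {env e3 e1 e2 v3 v2} : Eval body env e3 (.inr v3) →
      Eval body env e2 v2 → Eval body env (.switch e3 e1 e2) v2

/-- A ground specification over the uninterpreted function symbol `f`,
modelled semantically as the set of its models (interpretations of `f`). -/
def Spec : Type := (Val → Val) → Prop

/-- `SAT(φ ∧ f(v) = v')`: the formula `φ` together with `f(v) = v'`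
is satisfiable. -/
def Spec.sat (φ : Spec) (v v' : Val) : Prop := ∃ g : Val → Val, φ g ∧ g v = v'

/-- Angelic big-step semantics `e ⇓^φ v` relative to the ground
specification `φ`: a recursive call `f e` may return any value `v'`
such that `φ ∧ f(v) = v'` is satisfiable, where `e ⇓^φ v`. -/
inductive AEval (φ : Spec) : Val → Expr → Val → Prop
  | var {env} : AEval φ env .var env
  | app {env e v v'} : AEval φ env e v → φ.sat v v' → AEval φ env (.app e) v'
  | unit {env} : AEval φ env .unit .unit
  | pair {env e1 e2 v1 v2} : AEval φ env e1 v1 → AEval φ env e2 v2 →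
      AEval φ env (.pair e1 e2) (.pair v1 v2)
  | fst {env e v1 v2} : AEval φ env e (.pair v1 v2) → AEval φ env (.fst e) v1
  | snd {env e v1 v2} : AEval φ env e (.pair v1 v2) → AEval φ env (.snd e) v2
  | inl {env e v} : AEval φ env e v → AEval φ env (.inl e) (.inl v)
  | inr {env e v} : AEval φ env e v → AEval φ env (.inr e) (.inr v)
  | unl {env e v} : AEval φ env e (.inl v) → AEval φ env (.unl e) v
  | unr {env e v} : AEval φ env e (.inr v) → AEval φ env (.unr e) v
  | switchL {env e3 e1 e2 v3 v1} : AEval φ env e3 (.inl v3) →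
      AEval φ env e1 v1 → AEval φ env (.switch e3 e1 e2) v1
  | switchR {env e3 e1 e2 v3 v2} : AEval φ env e3 (.inr v3) →
      AEval φ env e2 v2 → AEval φ env (.switch e3 e1 e2) v2

/-- `F` is the (total) standard input-output semantics of the program
`rec f(x) = body`. -/
def Agrees (body : Expr) (F : Val → Val) : Prop := ∀ v, Eval body v body (F v)

/-- `P ⊨ φ`: the program `rec f(x) = body` satisfies the ground
specification `φ` under the standard semantics, i.e. substituting the
input-output behaviour of the program for `f` makes `φ` true. -/
def Sat (body : Expr) (φ : Spec) : Prop := ∃ F : Val → Val, Agrees body F ∧ φ F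

/-- Conjunction of ground specifications. -/
def Spec.and (φ ψ : Spec) : Spec := fun g => φ g ∧ ψ g

/-- Negation of a ground specification. -/
def Spec.neg (φ : Spec) : Spec := fun g => ¬ φ g

/-- The specification `χ ∧ ⋀_{φ ∈ Ω} ¬φ` used by the algorithm, where `Ω`
is the global anti-specification set. -/
def strengthen (χ : Spec) (Ω : Set Spec) : Spec :=
  fun g => χ g ∧ ∀ φ ∈ Ω, ¬ φ g

/-- Result of the angelic synthesizer: either failure together with an
anti-specification `κ`, or success with a candidate program `P` and a
witness `ω` to angelic satisfaction. -/
inductive SAResult : Type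
  | failure : Set Spec → SAResult
  | success : Expr → Spec → SAResult

/-- The top-level backtracking synthesis algorithm (Algorithm 1),
parameterized by the angelic synthesizer `SA`, formalized as an inductive
relation `Synth SA χ Ω result Ω'` relating the input specification `χ`,
the incoming global anti-specification `Ω`, the returned result (`some P`
or `⊥ = none`) and the outgoing global anti-specification `Ω'`. -/
inductive Synth (SA : Spec → SAResult) : Spec → Set Spec → Option Expr → Set Spec → Prop
  | fail {χ Ω κ} :
      SA (strengthen χ Ω) = .failure κ →
      Synth SA χ Ω none (Ω ∪ κ)
  | found {χ Ω P ω} :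
      SA (strengthen χ Ω) = .success P ω →
      Sat P χ →
      Synth SA χ Ω (some P) Ω
  | recSuccess {χ Ω P ω P' Ω'} :
      SA (strengthen χ Ω) = .success P ω →
      ¬ Sat P χ →
      Synth SA (χ.and ω) Ω (some P') Ω' →
      Synth SA χ Ω (some P') Ω'
  | recBacktrack {χ Ω P ω Ω' r Ω''} :
      SA (strengthen χ Ω) = .success P ω →
      ¬ Sat P χ →
      Synth SA (χ.and ω) Ω none Ω' →
      Synth SA (χ.and ω.neg) Ω' r Ω'' →
      Synth SA χ Ω r Ω''

/-- `P` angelically satisfies `φ` (on all inputs). -/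
def ASat (body : Expr) (φ : Spec) : Prop :=
  ∀ v : Val, ∃ v' : Val, AEval φ v body v' ∧ φ.sat v v'

theorem synth_eval_det {body : Expr} {env : Val} {e : Expr} {v : Val}
    (h : Eval body env e v) : ∀ {w}, Eval body env e w → v = w := by
  induction h with
  | var => intro w hw; cases hw; rfl
  | app h1 h2 ih1 ih2 =>
      intro w hw; cases hw with
      | app g1 g2 => cases ih1 g1; exact ih2 g2
  | unit => intro w hw; cases hw; rfl
  | pair h1 h2 ih1 ih2 =>
      intro w hw; cases hw with
      | pair g1 g2 => rw [ih1 g1, ih2 g2]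
  | fst h1 ih1 =>
      intro w hw; cases hw with
      | fst g1 => cases ih1 g1; rfl
  | snd h1 ih1 =>
      intro w hw; cases hw with
      | snd g1 => cases ih1 g1; rfl
  | inl h1 ih1 =>
      intro w hw; cases hw with
      | inl g1 => rw [ih1 g1]
  | inr h1 ih1 =>
      intro w hw; cases hw with
      | inr g1 => rw [ih1 g1]
  | unl h1 ih1 =>
      intro w hw; cases hw with
      | unl g1 => cases ih1 g1; rfl
  | unr h1 ih1 =>
      intro w hw; cases hw with
      | unr g1 => cases ih1 g1; rfl
  | switchL h3 h1 ih3 ih1 =>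
      intro w hw; cases hw with
      | switchL g3 g1 => exact ih1 g1
      | switchR g3 g2 => cases ih3 g3
  | switchR h3 h2 ih3 ih2 =>
      intro w hw; cases hw with
      | switchL g3 g1 => cases ih3 g3
      | switchR g3 g2 => exact ih2 g2

theorem aeval_of_eval {body : Expr} {ψ : Spec}
    (hsat : ∀ u w, Eval body u body w → ψ.sat u w) :
    ∀ {env e v}, Eval body env e v → AEval ψ env e v := by
  intro env e v h
  induction h with
  | var => exact .var
  | app h1 h2 ih1 ih2 => exact .app ih1 (hsat _ _ h2)
  | unit => exact .unit
  | pair _ _ ih1 ih2 => exact .pair ih1 ih2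
  | fst _ ih => exact .fst ih
  | snd _ ih => exact .snd ih
  | inl _ ih => exact .inl ih
  | inr _ ih => exact .inr ih
  | unl _ ih => exact .unl ih
  | unr _ ih => exact .unr ih
  | switchL _ _ ih3 ih1 => exact .switchL ih3 ih1
  | switchR _ _ ih3 ih2 => exact .switchR ih3 ih2

theorem asat_of_sat {P : Expr} {ψ : Spec} (h : Sat P ψ) : ASat P ψ := by
  obtain ⟨F, hF, hψ⟩ := h
  have hsat : ∀ u w, Eval P u P w → ψ.sat u w := by
    intro u w hew
    have := synth_eval_det (hF u) hew
    exact ⟨F, hψ, this⟩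
  intro v
  exact ⟨F v, aeval_of_eval hsat (hF v), ⟨F, hψ, rfl⟩⟩

theorem synth_key (SA : Spec → SAResult) (χ : Spec)
    (h1 : ∀ ψ κ, SA ψ = .failure κ → ∀ P : Expr, ¬ ASat P ψ)
    (h2 : ∀ ψ κ, SA ψ = .failure κ → ∀ φ ∈ κ, ∀ P : Expr, Sat P φ → ¬ Sat P χ)
    {χ' : Spec} {Ω : Set Spec} {r : Option Expr} {Ω' : Set Spec}
    (h : Synth SA χ' Ω r Ω')
    (hΩ : ∀ φ ∈ Ω, ∀ P : Expr, Sat P φ → ¬ Sat P χ) :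
    (∀ φ ∈ Ω', ∀ P : Expr, Sat P φ → ¬ Sat P χ) ∧
      (r = none → ∀ P : Expr, Sat P χ' → ¬ Sat P χ) := by
  induction h with
  | @fail χ' Ω κ hfail =>
      refine ⟨?_, ?_⟩
      · intro φ hφ P
        rcases hφ with hφ | hφ
        · exact hΩ φ hφ P
        · exact h2 _ _ hfail φ hφ P
      · intro _ P hPχ' hPχ
        obtain ⟨F, hF, hχ'⟩ := hPχ'
        by_cases hall : ∀ φ ∈ Ω, ¬ φ F
        · exact h1 _ _ hfail P (asat_of_sat ⟨F, hF, hχ', hall⟩)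
        · push_neg at hall
          obtain ⟨φ, hφΩ, hφF⟩ := hall
          exact hΩ φ hφΩ P ⟨F, hF, hφF⟩ hPχ
  | found _ _ => exact ⟨hΩ, by simp⟩
  | recSuccess _ _ _ ih => exact ⟨(ih hΩ).1, by simp⟩
  | @recBacktrack χ' Ω P ω Ω' r Ω'' _ _ _ _ ih1 ih2 =>
      obtain ⟨hΩ', hnone1⟩ := ih1 hΩ
      obtain ⟨hΩ'', hnone2⟩ := ih2 hΩ'
      refine ⟨hΩ'', ?_⟩
      intro hr Q hQχ'
      obtain ⟨F, hF, hχ'⟩ := hQχ'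
      by_cases hω : ω F
      · exact hnone1 rfl Q ⟨F, hF, hχ', hω⟩
      · exact hnone2 hr Q ⟨F, hF, hχ', hω⟩

/-- completeness of the top-level synthesis algorithm.
Assume (1) the angelic synthesizer is complete: whenever it fails on `ψ`,
no program angelically satisfies `ψ`; and (2) whenever it returns
`Failure(κ)`, the set `κ` is a valid anti-specification for `χ`: for every
`φ ∈ κ` and program `P`, `P ⊨ φ` implies `P ⊭ χ`.  If, starting from a
global anti-specification `Ω` valid for `χ`, `Synthesize(χ)` returns `⊥`,
then no program satisfies `χ` under the standard semantics. -/
theorem synthesize_complete (SA : Spec → SAResult) (χ : Spec)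
    (h1 : ∀ ψ κ, SA ψ = .failure κ → ∀ P : Expr, ¬ ASat P ψ)
    (h2 : ∀ ψ κ, SA ψ = .failure κ → ∀ φ ∈ κ, ∀ P : Expr, Sat P φ → ¬ Sat P χ)
    (Ω Ω' : Set Spec)
    (hΩ : ∀ φ ∈ Ω, ∀ P : Expr, Sat P φ → ¬ Sat P χ)
    (h : Synth SA χ Ω none Ω') :
    ∀ P : Expr, ¬ Sat P χ := by
  intro P hP
  exact (synth_key SA χ h1 h2 h hΩ).2 rfl P hP hP
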